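/- arXiv:2404.02030 — 3 statements merged into one kernel-verified Lean document; each statement's English description precedes it below -/
import Mathlib

section
/- Suppose ℋ is a hereditary 3-graph property with VC₂(ℋ)=∞. Then for every tripartite 3-graph H=(A∪B∪C,E) (with E⊆K₃[A,B,C]), there is a 3-graph H'∈ℋ with vertex set V(H')=A∪B∪C whose edge set satisfies E(H')∩K₃[A,B,C]=E. -/
open scoped Classical
open Finset

set_option maxHeartbeats 1000000

/-- A 3-uniform hypergraph on a finite vertex set of naturals. -/
structure ThreeGraph where
  verts : Finset ℕ
  edges : Finset (Finset ℕ)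
  edges_sub : ∀ e ∈ edges, e ⊆ verts ∧ e.card = 3

/-- The set `Ē` of ordered triples corresponding to edges. -/
def ThreeGraph.obar (H : ThreeGraph) : Finset (ℕ × ℕ × ℕ) :=
  (H.verts ×ˢ H.verts ×ˢ H.verts).filter fun p => ({p.1, p.2.1, p.2.2} : Finset ℕ) ∈ H.edges

/-- A bigraph `(U,V;E)`. -/
structure Bigraph where
  left : Finset ℕ
  right : Finset ℕ
  edges : Finset (ℕ × ℕ)
  edges_sub : edges ⊆ left ×ˢ right

noncomputable def Bigraph.density (B : Bigraph) : ℝ :=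
  (B.edges.card : ℝ) / ((B.left.card : ℝ) * (B.right.card : ℝ))

noncomputable def Bigraph.gfun (B : Bigraph) (u w : ℕ) : ℝ :=
  if (u, w) ∈ B.edges then 1 - B.density else -B.density

noncomputable def Bigraph.devSum (B : Bigraph) : ℝ :=
  ∑ u₀ ∈ B.left, ∑ u₁ ∈ B.left, ∑ w₀ ∈ B.right, ∑ w₁ ∈ B.right,
    B.gfun u₀ w₀ * B.gfun u₀ w₁ * B.gfun u₁ w₀ * B.gfun u₁ w₁

/-- `B` has `dev₂(ε,d)`. -/
def Bigraph.dev2 (B : Bigraph) (ε d : ℝ) : Prop :=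
  |B.density - d| ≤ ε ∧ B.devSum ≤ ε * (B.left.card : ℝ) ^ 2 * (B.right.card : ℝ) ^ 2

/-- `B` has `dev₂(ε)`, i.e. `dev₂(ε, d_B)`. -/
def Bigraph.dev2self (B : Bigraph) (ε : ℝ) : Prop := B.dev2 ε B.density

noncomputable def Bigraph.dBetween (B : Bigraph) (X Y : Finset ℕ) : ℝ :=
  ((B.edges ∩ X ×ˢ Y).card : ℝ) / ((X.card : ℝ) * (Y.card : ℝ))

/-- `ε`-regularity for a bigraph. -/
def Bigraph.EpsRegular (B : Bigraph) (ε : ℝ) : Prop :=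
  ∀ X ⊆ B.left, ∀ Y ⊆ B.right,
    ε * (B.left.card : ℝ) ≤ (X.card : ℝ) → ε * (B.right.card : ℝ) ≤ (Y.card : ℝ) →
      |B.density - B.dBetween X Y| ≤ ε

/-- Irreducibility: distinct vertices have distinct neighborhoods, on both sides. -/
def Bigraph.Irreducible (B : Bigraph) : Prop :=
  (∀ u ∈ B.left, ∀ u' ∈ B.left, (∀ v : ℕ, (u, v) ∈ B.edges ↔ (u', v) ∈ B.edges) → u = u') ∧
  (∀ v ∈ B.right, ∀ v' ∈ B.right, (∀ u : ℕ, (u, v) ∈ B.edges ↔ (u, v') ∈ B.edges) → v = v')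

def Bigraph.leftNbhd (B : Bigraph) (v : ℕ) : Finset ℕ :=
  B.left.filter fun u => (u, v) ∈ B.edges

/-- `B` contains an induced copy of the abstract bigraph on `Fin k × Fin k` given by `F`. -/
def Bigraph.HasInducedPattern (B : Bigraph) (k : ℕ) (F : Fin k → Fin k → Prop) : Prop :=
  ∃ u v : Fin k → ℕ, (∀ a, u a ∈ B.left) ∧ (∀ b, v b ∈ B.right) ∧
    ∀ a b, ((u a, v b) ∈ B.edges ↔ F a b)

/-- A triad `(X,Y,Z; E_XY, E_YZ, E_XZ)`. -/
structure Triad where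
  X : Finset ℕ
  Y : Finset ℕ
  Z : Finset ℕ
  EXY : Finset (ℕ × ℕ)
  EYZ : Finset (ℕ × ℕ)
  EXZ : Finset (ℕ × ℕ)
  hXY : EXY ⊆ X ×ˢ Y
  hYZ : EYZ ⊆ Y ×ˢ Z
  hXZ : EXZ ⊆ X ×ˢ Z

def Triad.K3 (G : Triad) : Finset (ℕ × ℕ × ℕ) :=
  (G.X ×ˢ G.Y ×ˢ G.Z).filter fun p =>
    (p.1, p.2.1) ∈ G.EXY ∧ (p.2.1, p.2.2) ∈ G.EYZ ∧ (p.1, p.2.2) ∈ G.EXZ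

def Triad.bXY (G : Triad) : Bigraph := ⟨G.X, G.Y, G.EXY, G.hXY⟩
def Triad.bYZ (G : Triad) : Bigraph := ⟨G.Y, G.Z, G.EYZ, G.hYZ⟩
def Triad.bXZ (G : Triad) : Bigraph := ⟨G.X, G.Z, G.EXZ, G.hXZ⟩

/-- `d_H(G)` where the (tri)graph is given by its set `R` of ordered triples. -/
noncomputable def relDensity (R : Finset (ℕ × ℕ × ℕ)) (G : Triad) : ℝ :=
  ((R ∩ G.K3).card : ℝ) / (G.K3.card : ℝ)

noncomputable def hFun (R : Finset (ℕ × ℕ × ℕ)) (G : Triad) (x y z : ℕ) : ℝ :=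
  if (x, y, z) ∈ G.K3 then
    (if (x, y, z) ∈ R then 1 - relDensity R G else -(relDensity R G))
  else 0

noncomputable def devSum3 (R : Finset (ℕ × ℕ × ℕ)) (G : Triad) : ℝ :=
  ∑ u₀ ∈ G.X, ∑ u₁ ∈ G.X, ∑ w₀ ∈ G.Y, ∑ w₁ ∈ G.Y, ∑ z₀ ∈ G.Z, ∑ z₁ ∈ G.Z,
    hFun R G u₀ w₀ z₀ * hFun R G u₀ w₀ z₁ * hFun R G u₀ w₁ z₀ * hFun R G u₀ w₁ z₁ *
      hFun R G u₁ w₀ z₀ * hFun R G u₁ w₀ z₁ * hFun R G u₁ w₁ z₀ * hFun R G u₁ w₁ z₁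

/-- `(H,G)` has `dev_{2,3}(ε₁,ε₂)`, where the trigraph/3-graph is given by triples `R`. -/
def dev23 (R : Finset (ℕ × ℕ × ℕ)) (G : Triad) (ε₁ ε₂ : ℝ) : Prop :=
  ∃ dXY dYZ dXZ : ℝ, 0 < dXY ∧ 0 < dYZ ∧ 0 < dXZ ∧
    G.bXY.dev2 ε₂ dXY ∧ G.bXZ.dev2 ε₂ dXZ ∧ G.bYZ.dev2 ε₂ dYZ ∧
    devSum3 R G ≤ ε₁ * dXY ^ 4 * dYZ ^ 4 * dXZ ^ 4 *
      (G.X.card : ℝ) ^ 2 * (G.Y.card : ℝ) ^ 2 * (G.Z.card : ℝ) ^ 2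

/-- `G` is `μ`-homogeneous with respect to the triples `R`: `d_H(G) ∈ [0,μ) ∪ (1-μ,1]`. -/
def homTriad (R : Finset (ℕ × ℕ × ℕ)) (G : Triad) (μ : ℝ) : Prop :=
  relDensity R G < μ ∨ 1 - μ < relDensity R G

/-- A `(t,ℓ)`-decomposition of `V`, with part-indices `ι` and pair-indices `κ`. -/
structure Decomp (V : Finset ℕ) (ι κ : Type) where
  part : ι → Finset ℕ
  part_sub : ∀ i, part i ⊆ V
  part_disj : ∀ i j, i ≠ j → Disjoint (part i) (part j)
  part_cover : ∀ x ∈ V, ∃ i, x ∈ part i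
  pairs : ι → ι → κ → Finset (ℕ × ℕ)
  pairs_sub : ∀ i j α, pairs i j α ⊆ part i ×ˢ part j
  pairs_disj : ∀ i j α β, α ≠ β → Disjoint (pairs i j α) (pairs i j β)
  pairs_cover : ∀ i j, ∀ p ∈ part i ×ˢ part j, ∃ α, p ∈ pairs i j α

def Decomp.pairBG {V : Finset ℕ} {ι κ : Type} (P : Decomp V ι κ) (i j : ι) (α : κ) : Bigraph :=
  ⟨P.part i, P.part j, P.pairs i j α, P.pairs_sub i j α⟩

/-- The triad `G^{ijk}_{α,β,γ} = (V_i,V_j,V_k; P^α_{ij}, P^β_{ik}, P^γ_{jk})`. -/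
def Decomp.triadOf {V : Finset ℕ} {ι κ : Type} (P : Decomp V ι κ) (i j k : ι) (α β γ : κ) :
    Triad :=
  ⟨P.part i, P.part j, P.part k, P.pairs i j α, P.pairs j k γ, P.pairs i k β,
    P.pairs_sub i j α, P.pairs_sub j k γ, P.pairs_sub i k β⟩

/-- `P` is a `(t,ℓ,ε₁,ε₂)`-decomposition. -/
def Decomp.isReg {V : Finset ℕ} {ι κ : Type} (P : Decomp V ι κ) (ε₁ ε₂ : ℝ) : Prop :=
  (1 - ε₁) * (V.card : ℝ) ^ 2 ≤
    (((V ×ˢ V).filter fun p =>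
      ∃ i j α, p ∈ P.pairs i j α ∧ (P.pairBG i j α).dev2self ε₂).card : ℝ)

/-- `P` is equitable. -/
def Decomp.isEquitable {V : Finset ℕ} {ι κ : Type} [Fintype κ]
    (P : Decomp V ι κ) (ε₁ ε₂ : ℝ) : Prop :=
  (∀ i j, (P.part i).card ≤ (P.part j).card + 1) ∧
  (1 - ε₁) * (V.card : ℝ) ^ 2 ≤
    (((V ×ˢ V).filter fun p =>
      ∃ i j α, p ∈ P.pairs i j α ∧
        (P.pairBG i j α).dev2 ε₂ (1 / (Fintype.card κ : ℝ))).card : ℝ)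

/-- `P` is `dev_{2,3}(ε₁,ε₂)`-regular with respect to the triples `R`. -/
def Decomp.regWrt {V : Finset ℕ} {ι κ : Type} (P : Decomp V ι κ)
    (R : Finset (ℕ × ℕ × ℕ)) (ε₁ ε₂ : ℝ) : Prop :=
  (1 - ε₁) * (V.card : ℝ) ^ 3 ≤
    (((V ×ˢ V ×ˢ V).filter fun p =>
      ∃ i j k α β γ, p ∈ (P.triadOf i j k α β γ).K3 ∧
        dev23 R (P.triadOf i j k α β γ) ε₁ ε₂).card : ℝ)

/-- The triad `G^{ijk}_{α,β,γ}` of `P` is `μ`-non-trivial. -/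
def Decomp.nonTrivTriad {V : Finset ℕ} {t ℓ : ℕ} (P : Decomp V (Fin t) (Fin ℓ)) (μ : ℝ)
    (i j k : Fin t) (α β γ : Fin ℓ) : Prop :=
  μ * (V.card : ℝ) / (t : ℝ) ≤ ((P.part i).card : ℝ) ∧
  μ * (V.card : ℝ) / (t : ℝ) ≤ ((P.part j).card : ℝ) ∧
  μ * (V.card : ℝ) / (t : ℝ) ≤ ((P.part k).card : ℝ) ∧
  μ * ((P.part i).card : ℝ) * ((P.part j).card : ℝ) / (ℓ : ℝ) ≤ ((P.pairs i j α).card : ℝ) ∧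
  μ * ((P.part i).card : ℝ) * ((P.part k).card : ℝ) / (ℓ : ℝ) ≤ ((P.pairs i k β).card : ℝ) ∧
  μ * ((P.part j).card : ℝ) * ((P.part k).card : ℝ) / (ℓ : ℝ) ≤ ((P.pairs j k γ).card : ℝ)

/-- `H` has a `dev_{2,3}(ε₁,ε₂)`-regular `(t,ℓ,ε₁,ε₂)`-decomposition. -/
def GoodDecomp (H : ThreeGraph) (t ℓ : ℕ) (ε₁ ε₂ : ℝ) : Prop :=
  ∃ P : Decomp H.verts (Fin t) (Fin ℓ), P.isReg ε₁ ε₂ ∧ P.regWrt H.obar ε₁ ε₂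

def ThreeGraph.Iso (H₁ H₂ : ThreeGraph) : Prop :=
  ∃ f : ℕ → ℕ, Set.BijOn f ↑H₁.verts ↑H₂.verts ∧
    ∀ x ∈ H₁.verts, ∀ y ∈ H₁.verts, ∀ z ∈ H₁.verts,
      (({x, y, z} : Finset ℕ) ∈ H₁.edges ↔ ({f x, f y, f z} : Finset ℕ) ∈ H₂.edges)

def ThreeGraph.induce (H : ThreeGraph) (W : Finset ℕ) : ThreeGraph where
  verts := H.verts ∩ W
  edges := H.edges.filter fun e => e ⊆ W
  edges_sub := by
    intro e he
    rw [Finset.mem_filter] at he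
    obtain ⟨hsub, hcard⟩ := H.edges_sub e he.1
    exact ⟨fun x hx => Finset.mem_inter.mpr ⟨hsub hx, he.2 hx⟩, hcard⟩

/-- A hereditary property of 3-graphs. -/
def Hereditary (ℋ : Set ThreeGraph) : Prop :=
  (∀ H₁ H₂ : ThreeGraph, ThreeGraph.Iso H₁ H₂ → H₁ ∈ ℋ → H₂ ∈ ℋ) ∧
  (∀ H ∈ ℋ, ∀ W : Finset ℕ, H.induce W ∈ ℋ)

/-- The statement `ψ(ε₁,ε₂,T,L,ℋ)`. -/
def psi (ε₁ : ℝ) (ε₂ : ℕ → ℝ) (T L : ℕ) (ℋ : Set ThreeGraph) : Prop :=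
  ∃ n₀ : ℕ, ∀ H ∈ ℋ, n₀ ≤ H.verts.card →
    ∃ t ℓ : ℕ, 1 ≤ t ∧ t ≤ T ∧ 1 ≤ ℓ ∧ ℓ ≤ L ∧ GoodDecomp H t ℓ ε₁ (ε₂ ℓ)

/-- `L_ℋ(ε₁,ε₂)`: minimal `L` such that `ψ(ε₁,ε₂,T,L,ℋ)` holds for some `T ≥ 1`. -/
noncomputable def Lfun (ℋ : Set ThreeGraph) (ε₁ : ℝ) (ε₂ : ℕ → ℝ) : ℕ :=
  sInf {L : ℕ | ∃ T : ℕ, 1 ≤ T ∧ psi ε₁ ε₂ T L ℋ}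

def InZeroOne (f : ℕ → ℝ) : Prop := ∀ x, 0 < f x ∧ f x ≤ 1

/-- "For all sufficiently small `ε₁ > 0` and all `ε₂` tending to `0` sufficiently fast, `Φ`". -/
def SmallEps (Φ : ℝ → (ℕ → ℝ) → Prop) : Prop :=
  ∃ e₁ : ℝ, 0 < e₁ ∧ ∀ ε₁ : ℝ, 0 < ε₁ → ε₁ < e₁ →
    ∃ δ : ℕ → ℝ, InZeroOne δ ∧
      ∀ ε₂ : ℕ → ℝ, InZeroOne ε₂ → (∀ x, ε₂ x ≤ δ x) → Φ ε₁ ε₂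

/-- The `VC₂`-dimension of `H` is at least `k`. -/
def ThreeGraph.VC2AtLeast (H : ThreeGraph) (k : ℕ) : Prop :=
  ∃ a b : Fin k → ℕ, ∃ c : Finset (Fin k × Fin k) → ℕ,
    (∀ i, a i ∈ H.verts) ∧ (∀ i, b i ∈ H.verts) ∧ (∀ S, c S ∈ H.verts) ∧
    ∀ (i j : Fin k) (S : Finset (Fin k × Fin k)),
      (({a i, b j, c S} : Finset ℕ) ∈ H.edges ↔ (i, j) ∈ S)

/-- `K₃[A,B,C]`: the triples meeting each of `A`, `B`, `C`. -/
def K3Parts (A B C : Finset ℕ) : Finset (Finset ℕ) :=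
  (A ×ˢ B ×ˢ C).image fun p => ({p.1, p.2.1, p.2.2} : Finset ℕ)

/-- Neighborhood of `u` in the pair-set `W`, inside ambient set `V`. -/
def Nbhd (V : Finset ℕ) (W : Finset (ℕ × ℕ)) (u : ℕ) : Finset ℕ :=
  V.filter fun v => (u, v) ∈ W

/-- An edge-colored bigraph `(U,V;E₀,E₁,E₂)`. -/
structure ECBigraph where
  left : Finset ℕ
  right : Finset ℕ
  E0 : Finset (ℕ × ℕ)
  E1 : Finset (ℕ × ℕ)
  E2 : Finset (ℕ × ℕ)
  disj01 : Disjoint E0 E1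
  disj02 : Disjoint E0 E2
  disj12 : Disjoint E1 E2
  cover : E0 ∪ E1 ∪ E2 = left ×ˢ right

/-- `G` contains an `E₀/E₁`-copy of `U_bg(k)`. -/
def ECBigraph.CopyUbg (G : ECBigraph) (k : ℕ) : Prop :=
  ∃ u : Finset (Fin k) → ℕ, ∃ v : Fin k → ℕ,
    (∀ S, u S ∈ G.left) ∧ (∀ i, v i ∈ G.right) ∧
    ∀ (S : Finset (Fin k)) (i : Fin k),
      (i ∈ S → (u S, v i) ∈ G.E1) ∧ (i ∉ S → (u S, v i) ∈ G.E0)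

/-- `G` contains an `E₀/E₁`-copy of the bigraph `R`. -/
def ECBigraph.Copy01 (G : ECBigraph) (R : Bigraph) : Prop :=
  ∃ u v : ℕ → ℕ,
    (∀ a ∈ R.left, u a ∈ G.left) ∧ (∀ b ∈ R.right, v b ∈ G.right) ∧
    ∀ a ∈ R.left, ∀ b ∈ R.right,
      ((a, b) ∈ R.edges → (u a, v b) ∈ G.E1) ∧ ((a, b) ∉ R.edges → (u a, v b) ∈ G.E0)

/-- `K₂[A,B]`: the crossing (unordered) pairs. -/
def pairsAB (A B : Finset ℕ) : Finset (Finset ℕ) :=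
  (A ×ˢ B).image fun p => ({p.1, p.2} : Finset ℕ)

/-- A bipartite `U`-colored graph `Γ = (A ∪ B, (P_u)_{u ∈ U})`. -/
structure BipColored (U : Finset ℕ) where
  A : Finset ℕ
  B : Finset ℕ
  disjAB : Disjoint A B
  P : ℕ → Finset (Finset ℕ)
  P_disj : ∀ u ∈ U, ∀ u' ∈ U, u ≠ u' → Disjoint (P u) (P u')
  P_cover : U.biUnion P = pairsAB A B

/-- The bipartite graph `(A ∪ B, P_u)` of a color, as a bigraph (ordered pairs `P̄_u`). -/
def BipColored.colorBG {U : Finset ℕ} (Γ : BipColored U) (u : ℕ) : Bigraph where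
  left := Γ.A
  right := Γ.B
  edges := (Γ.A ×ˢ Γ.B).filter fun p => ({p.1, p.2} : Finset ℕ) ∈ Γ.P u
  edges_sub := Finset.filter_subset _ _

/-- `H` is an `(n,Γ)`-blowup of `G` with the explicit family `Cfam` of new vertex classes. -/
def IsBlowupWith (G : Bigraph) (n : ℕ) (Γ : BipColored G.left) (Cfam : ℕ → Finset ℕ)
    (H : ThreeGraph) : Prop :=
  (∀ v ∈ G.right, (Cfam v).card = n) ∧
  (∀ v ∈ G.right, ∀ v' ∈ G.right, v ≠ v' → Disjoint (Cfam v) (Cfam v')) ∧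
  (∀ v ∈ G.right, Disjoint (Cfam v) (Γ.A ∪ Γ.B)) ∧
  H.verts = Γ.A ∪ Γ.B ∪ G.right.biUnion Cfam ∧
  ∀ u ∈ G.left, ∀ v ∈ G.right, ∀ e ∈ Γ.P u, ∀ z ∈ Cfam v,
    (((u, v) ∈ G.edges → insert z e ∈ H.edges) ∧ ((u, v) ∉ G.edges → insert z e ∉ H.edges))

def IsBlowup (G : Bigraph) (n : ℕ) (Γ : BipColored G.left) (H : ThreeGraph) : Prop :=
  ∃ Cfam : ℕ → Finset ℕ, IsBlowupWith G n Γ Cfam H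

def ThreeGraph.ContainsInduced (H H' : ThreeGraph) : Prop :=
  ∃ W : Finset ℕ, ThreeGraph.Iso (H.induce W) H'

/-- The `G`-dimension of `H` is at least `n`. -/
def GDimAtLeast (G : Bigraph) (H : ThreeGraph) (n : ℕ) : Prop :=
  ∀ Γ : BipColored G.left, Γ.A.card = n → Γ.B.card = n →
    ∃ H' : ThreeGraph, IsBlowup G n Γ H' ∧ H.ContainsInduced H'

/-- `G ∈ B_ℋ`: `G` is irreducible and `ℋ` has infinite `G`-dimension. -/
def InBH (ℋ : Set ThreeGraph) (G : Bigraph) : Prop :=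
  G.Irreducible ∧ ∀ m : ℕ, ∃ H ∈ ℋ, GDimAtLeast G H m

/-- An encoding of the bigraph `R` in `(H,P)`, where `Rtrip = Ē(H)`. -/
def Encoding {V : Finset ℕ} {t ℓ : ℕ} (R : Bigraph) (Rtrip : Finset (ℕ × ℕ × ℕ))
    (P : Decomp V (Fin t) (Fin ℓ)) (ε₂ : ℝ) : Prop :=
  ∃ j₀ k₀ : Fin t, j₀ ≠ k₀ ∧
    ∃ f : ℕ → Fin ℓ, ∃ g : ℕ → Fin t × Fin ℓ × Fin ℓ,
      (∀ u ∈ R.left, (P.pairBG j₀ k₀ (f u)).dev2 ε₂ (1 / (ℓ : ℝ))) ∧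
      (∀ v ∈ R.right,
        (P.pairBG (g v).1 j₀ (g v).2.1).dev2 ε₂ (1 / (ℓ : ℝ)) ∧
        (P.pairBG (g v).1 k₀ (g v).2.2).dev2 ε₂ (1 / (ℓ : ℝ))) ∧
      ∀ u ∈ R.left, ∀ v ∈ R.right,
        (((u, v) ∈ R.edges →
          ((P.triadOf (g v).1 j₀ k₀ (g v).2.1 (g v).2.2 (f u)).K3.card : ℝ) / 2 ≤
            ((Rtrip ∩ (P.triadOf (g v).1 j₀ k₀ (g v).2.1 (g v).2.2 (f u)).K3).card : ℝ)) ∧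
         ((u, v) ∉ R.edges →
          ((Rtrip ∩ (P.triadOf (g v).1 j₀ k₀ (g v).2.1 (g v).2.2 (f u)).K3).card : ℝ) <
            ((P.triadOf (g v).1 j₀ k₀ (g v).2.1 (g v).2.2 (f u)).K3.card : ℝ) / 2))

def encodeSet (S : Finset ℕ) : ℕ := ∑ i ∈ S, 2 ^ i

/-- The bigraph `U_bg(k)` realized on `ℕ`, with subsets of `[k]` encoded in binary. -/
def Ubg (k : ℕ) : Bigraph where
  left := ((Finset.range k).powerset).image encodeSet
  right := Finset.range k
  edges := ((Finset.range k).powerset).biUnion fun S => S.image fun i => (encodeSet S, i)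
  edges_sub := by
    intro p hp
    simp only [Finset.mem_biUnion, Finset.mem_image, Finset.mem_powerset] at hp
    obtain ⟨S, hS, i, hi, rfl⟩ := hp
    refine Finset.mem_product.mpr ⟨?_, ?_⟩
    · exact Finset.mem_image.mpr ⟨S, Finset.mem_powerset.mpr hS, rfl⟩
    · exact hS hi


lemma img_inj_eq {f : ℕ → ℕ} {W e₁ e₂ : Finset ℕ} (hf : Set.InjOn f ↑W)
    (h1 : e₁ ⊆ W) (h2 : e₂ ⊆ W) (h : e₁.image f = e₂.image f) : e₁ = e₂ := by
  have key : ∀ s t : Finset ℕ, s ⊆ W → t ⊆ W → s.image f ⊆ t.image f → s ⊆ t := by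
    intro s t hs ht hst x hx
    obtain ⟨y, hy, hyx⟩ := Finset.mem_image.mp (hst (Finset.mem_image_of_mem f hx))
    rwa [← hf (Finset.mem_coe.mpr (ht hy)) (Finset.mem_coe.mpr (hs hx)) hyx]
  exact subset_antisymm (key _ _ h1 h2 h.le) (key _ _ h2 h1 h.ge)

lemma card2_ne3 (x y z : ℕ) (h : x = y ∨ x = z ∨ y = z) :
    ¬ (({x, y, z} : Finset ℕ).card = 3) := by
  intro h3
  have h2 : ({x, y, z} : Finset ℕ).card ≤ 2 := by
    rcases h with rfl | rfl | rfl
    · have hs : ({x, x, z} : Finset ℕ) ⊆ {x, z} := by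
        intro t ht; simp at ht ⊢; tauto
      exact (Finset.card_le_card hs).trans
        (by simpa using Finset.card_insert_le x ({z} : Finset ℕ))
    · have hs : ({x, y, x} : Finset ℕ) ⊆ {x, y} := by
        intro t ht; simp at ht ⊢; tauto
      exact (Finset.card_le_card hs).trans
        (by simpa using Finset.card_insert_le x ({y} : Finset ℕ))
    · have hs : ({x, y, y} : Finset ℕ) ⊆ {x, y} := by
        intro t ht; simp at ht ⊢; tauto
      exact (Finset.card_le_card hs).trans
        (by simpa using Finset.card_insert_le x ({y} : Finset ℕ))
  omega

/-- Properties of infinite `VC₂`-dimension contain all tripartite patterns. -/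
theorem stmt_6 (ℋ : Set ThreeGraph) (hH : Hereditary ℋ)
    (hVC : ∀ k : ℕ, ∃ H ∈ ℋ, H.VC2AtLeast k)
    (A B C : Finset ℕ) (hAB : Disjoint A B) (hAC : Disjoint A C) (hBC : Disjoint B C)
    (E : Finset (Finset ℕ)) (hE : E ⊆ K3Parts A B C) :
    ∃ H' ∈ ℋ, H'.verts = A ∪ B ∪ C ∧ H'.edges ∩ K3Parts A B C = E := by
  classical
  set a := A.card with ha
  set b := B.card with hb
  set c := C.card with hc
  set k := a + b + c + 2 with hkdef
  obtain ⟨H, hHmem, av, bv, cv, hav, hbv, hcv, hedge⟩ := hVC k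
  -- enumerations of A, B, C
  obtain ⟨α, αmem, αinj, αsurj⟩ :
      ∃ α : Fin a → ℕ, (∀ i, α i ∈ A) ∧ Function.Injective α ∧ ∀ x ∈ A, ∃ i, α i = x := by
    refine ⟨fun i => (A.orderIsoOfFin ha.symm i : ℕ), fun i => (A.orderIsoOfFin ha.symm i).2,
      fun i j hij => (A.orderIsoOfFin ha.symm).injective (Subtype.ext hij), fun x hx => ?_⟩
    exact ⟨(A.orderIsoOfFin ha.symm).symm ⟨x, hx⟩, by simp⟩
  obtain ⟨β, βmem, βinj, βsurj⟩ :
      ∃ β : Fin b → ℕ, (∀ i, β i ∈ B) ∧ Function.Injective β ∧ ∀ x ∈ B, ∃ i, β i = x := by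
    refine ⟨fun i => (B.orderIsoOfFin hb.symm i : ℕ), fun i => (B.orderIsoOfFin hb.symm i).2,
      fun i j hij => (B.orderIsoOfFin hb.symm).injective (Subtype.ext hij), fun x hx => ?_⟩
    exact ⟨(B.orderIsoOfFin hb.symm).symm ⟨x, hx⟩, by simp⟩
  obtain ⟨γ, γmem, γinj, γsurj⟩ :
      ∃ γ : Fin c → ℕ, (∀ i, γ i ∈ C) ∧ Function.Injective γ ∧ ∀ x ∈ C, ∃ i, γ i = x := by
    refine ⟨fun i => (C.orderIsoOfFin hc.symm i : ℕ), fun i => (C.orderIsoOfFin hc.symm i).2,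
      fun i j hij => (C.orderIsoOfFin hc.symm).injective (Subtype.ext hij), fun x hx => ?_⟩
    exact ⟨(C.orderIsoOfFin hc.symm).symm ⟨x, hx⟩, by simp⟩
  -- the key construction: distinct vertices realizing the pattern
  obtain ⟨u, v, w, hu, hv, hw, huinj, hvinj, hwinj, huv, huw, hvw, hmain⟩ :
      ∃ (u : Fin a → ℕ) (v : Fin b → ℕ) (w : Fin c → ℕ),
        (∀ i, u i ∈ H.verts) ∧ (∀ j, v j ∈ H.verts) ∧ (∀ m, w m ∈ H.verts) ∧
        Function.Injective u ∧ Function.Injective v ∧ Function.Injective w ∧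
        (∀ i j, u i ≠ v j) ∧ (∀ i m, u i ≠ w m) ∧ (∀ j m, v j ≠ w m) ∧
        (∀ i j m, (({u i, v j, w m} : Finset ℕ) ∈ H.edges ↔
          ({α i, β j, γ m} : Finset ℕ) ∈ E)) := by
    obtain ⟨iA, hiA⟩ : ∃ g : Fin a → Fin k, ∀ i, (g i).val = i.val :=
      ⟨fun i => ⟨i.val, by have := i.isLt; omega⟩, fun i => rfl⟩
    obtain ⟨jB, hjB⟩ : ∃ g : Fin b → Fin k, ∀ j, (g j).val = j.val :=
      ⟨fun j => ⟨j.val, by have := j.isLt; omega⟩, fun j => rfl⟩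
    obtain ⟨tg, htg⟩ : ∃ g : Fin c → Fin k, ∀ m, (g m).val = b + 1 + m.val :=
      ⟨fun m => ⟨b + 1 + m.val, by have := m.isLt; omega⟩, fun m => rfl⟩
    obtain ⟨ra, hra⟩ : ∃ x : Fin k, x.val = a := ⟨⟨a, by omega⟩, rfl⟩
    obtain ⟨cb, hcb⟩ : ∃ x : Fin k, x.val = b := ⟨⟨b, by omega⟩, rfl⟩
    obtain ⟨z0, hz0⟩ : ∃ x : Fin k, x.val = 0 := ⟨⟨0, by omega⟩, rfl⟩
    obtain ⟨Sf, hSf⟩ : ∃ Sf : Fin c → Finset (Fin k × Fin k), ∀ m p, p ∈ Sf m ↔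
        ((∃ (hi : p.1.val < a) (hj : p.2.val < b),
            ({α ⟨p.1.val, hi⟩, β ⟨p.2.val, hj⟩, γ m} : Finset ℕ) ∈ E) ∨
          p.2.val = b ∨ (p.1.val = a ∧ p.2.val < b) ∨
          (p.1.val = a ∧ p.2.val = b + 1 + m.val)) := by
      refine ⟨fun m => Finset.univ.filter fun p =>
        ((∃ (hi : p.1.val < a) (hj : p.2.val < b),
            ({α ⟨p.1.val, hi⟩, β ⟨p.2.val, hj⟩, γ m} : Finset ℕ) ∈ E) ∨
          p.2.val = b ∨ (p.1.val = a ∧ p.2.val < b) ∨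
          (p.1.val = a ∧ p.2.val = b + 1 + m.val)), fun m p => ?_⟩
      simp [Finset.mem_filter]
    refine ⟨fun i => av (iA i), fun j => bv (jB j), fun m => cv (Sf m),
      fun _ => hav _, fun _ => hbv _, fun _ => hcv _, ?_, ?_, ?_, ?_, ?_, ?_, ?_⟩
    · -- u injective
      intro i i' h
      dsimp only at h
      have h1 := (hedge (iA i) z0 {(iA i, z0)}).mpr (Finset.mem_singleton_self _)
      rw [h] at h1
      have h2 := (hedge (iA i') z0 {(iA i, z0)}).mp h1
      have h3 := Finset.mem_singleton.mp h2
      have h4 : (iA i').val = (iA i).val := congrArg (fun q => (Prod.fst q).val) h3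
      exact Fin.ext (by rw [← hiA i, ← hiA i', h4])
    · -- v injective
      intro j j' h
      dsimp only at h
      have h1 := (hedge z0 (jB j) {(z0, jB j)}).mpr (Finset.mem_singleton_self _)
      rw [h] at h1
      have h2 := (hedge z0 (jB j') {(z0, jB j)}).mp h1
      have h3 := Finset.mem_singleton.mp h2
      have h4 : (jB j').val = (jB j).val := congrArg (fun q => (Prod.snd q).val) h3
      exact Fin.ext (by rw [← hjB j, ← hjB j', h4])
    · -- w injective
      intro m m' h
      dsimp only at h
      have hp : (ra, tg m) ∈ Sf m := by
        rw [hSf]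
        right; right; right
        exact ⟨hra, htg m⟩
      have h1 := (hedge ra (tg m) (Sf m)).mpr hp
      rw [h] at h1
      have h2 := (hedge ra (tg m) (Sf m')).mp h1
      rw [hSf] at h2
      have hm : m.val = m'.val := by
        rcases h2 with ⟨hi, hj, _⟩ | h2 | ⟨_, h2⟩ | ⟨_, h2⟩
        · rw [htg] at hj; omega
        · rw [htg] at h2; omega
        · rw [htg] at h2; omega
        · rw [htg] at h2; omega
      exact Fin.ext hm
    · -- u ≠ v
      intro i j h
      dsimp only at h
      have h1 := (hedge (iA i) (jB j) Finset.univ).mpr (Finset.mem_univ _)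
      have h3 := (H.edges_sub _ h1).2
      rw [h] at h3
      exact card2_ne3 _ _ _ (Or.inl rfl) h3
    · -- u ≠ w
      intro i m h
      dsimp only at h
      have hp : (iA i, cb) ∈ Sf m := by
        rw [hSf]; right; left; exact hcb
      have h1 := (hedge (iA i) cb (Sf m)).mpr hp
      have h3 := (H.edges_sub _ h1).2
      rw [h] at h3
      exact card2_ne3 _ _ _ (Or.inr (Or.inl rfl)) h3
    · -- v ≠ w
      intro j m h
      dsimp only at h
      have hp : (ra, jB j) ∈ Sf m := by
        rw [hSf]; right; right; left
        exact ⟨hra, by rw [hjB]; exact j.isLt⟩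
      have h1 := (hedge ra (jB j) (Sf m)).mpr hp
      have h3 := (H.edges_sub _ h1).2
      rw [h] at h3
      exact card2_ne3 _ _ _ (Or.inr (Or.inr rfl)) h3
    · -- the main equivalence
      intro i j m
      rw [hedge, hSf]
      constructor
      · rintro (⟨hi, hj, hmem⟩ | h2 | ⟨h2, _⟩ | ⟨_, h2⟩)
        · have e1 : (⟨(iA i).val, hi⟩ : Fin a) = i := Fin.ext (hiA i)
          have e2 : (⟨(jB j).val, hj⟩ : Fin b) = j := Fin.ext (hjB j)
          rwa [e1, e2] at hmem
        · rw [hjB] at h2; have := j.isLt; omega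
        · rw [hiA] at h2; have := i.isLt; omega
        · rw [hjB] at h2; have := j.isLt; omega
      · intro hmem
        left
        refine ⟨by rw [hiA]; exact i.isLt, by rw [hjB]; exact j.isLt, ?_⟩
        have e1 : (⟨(iA i).val, by rw [hiA]; exact i.isLt⟩ : Fin a) = i := Fin.ext (hiA i)
        have e2 : (⟨(jB j).val, by rw [hjB]; exact j.isLt⟩ : Fin b) = j := Fin.ext (hjB j)
        rw [e1, e2]
        exact hmem
  -- the vertex set W inside H
  set W : Finset ℕ := (Finset.univ.image u) ∪ (Finset.univ.image v) ∪ (Finset.univ.image w)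
    with hWdef
  have hWu : ∀ i, u i ∈ W := by
    intro i; rw [hWdef]
    exact Finset.mem_union_left _ (Finset.mem_union_left _
      (Finset.mem_image_of_mem u (Finset.mem_univ i)))
  have hWv : ∀ j, v j ∈ W := by
    intro j; rw [hWdef]
    exact Finset.mem_union_left _ (Finset.mem_union_right _
      (Finset.mem_image_of_mem v (Finset.mem_univ j)))
  have hWw : ∀ m, w m ∈ W := by
    intro m; rw [hWdef]
    exact Finset.mem_union_right _ (Finset.mem_image_of_mem w (Finset.mem_univ m))
  have hWcases : ∀ x ∈ W, (∃ i, u i = x) ∨ (∃ j, v j = x) ∨ (∃ m, w m = x) := by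
    intro x hx
    rw [hWdef] at hx
    simp only [Finset.mem_union, Finset.mem_image, Finset.mem_univ, true_and] at hx
    tauto
  have hWsub : W ⊆ H.verts := by
    intro x hx
    rcases hWcases x hx with ⟨i, rfl⟩ | ⟨j, rfl⟩ | ⟨m, rfl⟩
    · exact hu i
    · exact hv j
    · exact hw m
  -- the relabeling map
  set f : ℕ → ℕ := fun x =>
    if hx : ∃ i, u i = x then α hx.choose
    else if hx : ∃ j, v j = x then β hx.choose
    else if hx : ∃ m, w m = x then γ hx.choose
    else 0 with hfdef
  have hfu : ∀ i, f (u i) = α i := by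
    intro i
    have hx : ∃ i', u i' = u i := ⟨i, rfl⟩
    rw [hfdef]
    simp only
    rw [dif_pos hx, huinj hx.choose_spec]
  have hfv : ∀ j, f (v j) = β j := by
    intro j
    have hx1 : ¬ ∃ i, u i = v j := by rintro ⟨i, hi⟩; exact huv i j hi
    have hx : ∃ j', v j' = v j := ⟨j, rfl⟩
    rw [hfdef]
    simp only
    rw [dif_neg hx1, dif_pos hx, hvinj hx.choose_spec]
  have hfw : ∀ m, f (w m) = γ m := by
    intro m
    have hx1 : ¬ ∃ i, u i = w m := by rintro ⟨i, hi⟩; exact huw i m hi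
    have hx2 : ¬ ∃ j, v j = w m := by rintro ⟨j, hj⟩; exact hvw j m hj
    have hx : ∃ m', w m' = w m := ⟨m, rfl⟩
    rw [hfdef]
    simp only
    rw [dif_neg hx1, dif_neg hx2, dif_pos hx, hwinj hx.choose_spec]
  have hmapsto : ∀ x ∈ W, f x ∈ A ∪ B ∪ C := by
    intro x hx
    rcases hWcases x hx with ⟨i, rfl⟩ | ⟨j, rfl⟩ | ⟨m, rfl⟩
    · rw [hfu]; exact Finset.mem_union_left _ (Finset.mem_union_left _ (αmem i))
    · rw [hfv]; exact Finset.mem_union_left _ (Finset.mem_union_right _ (βmem j))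
    · rw [hfw]; exact Finset.mem_union_right _ (γmem m)
  have hinj : Set.InjOn f ↑W := by
    intro x hx y hy hxy
    rcases hWcases x (Finset.mem_coe.mp hx) with ⟨i, rfl⟩ | ⟨j, rfl⟩ | ⟨m, rfl⟩ <;>
      rcases hWcases y (Finset.mem_coe.mp hy) with ⟨i', rfl⟩ | ⟨j', rfl⟩ | ⟨m', rfl⟩
    · rw [hfu, hfu] at hxy; rw [αinj hxy]
    · rw [hfu, hfv] at hxy
      have h1 := αmem i; rw [hxy] at h1
      exact absurd (βmem j') (Finset.disjoint_left.mp hAB h1)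
    · rw [hfu, hfw] at hxy
      have h1 := αmem i; rw [hxy] at h1
      exact absurd (γmem m') (Finset.disjoint_left.mp hAC h1)
    · rw [hfv, hfu] at hxy
      have h1 := αmem i'; rw [← hxy] at h1
      exact absurd (βmem j) (Finset.disjoint_left.mp hAB h1)
    · rw [hfv, hfv] at hxy; rw [βinj hxy]
    · rw [hfv, hfw] at hxy
      have h1 := βmem j; rw [hxy] at h1
      exact absurd (γmem m') (Finset.disjoint_left.mp hBC h1)
    · rw [hfw, hfu] at hxy
      have h1 := αmem i'; rw [← hxy] at h1
      exact absurd (γmem m) (Finset.disjoint_left.mp hAC h1)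
    · rw [hfw, hfv] at hxy
      have h1 := βmem j'; rw [← hxy] at h1
      exact absurd (γmem m) (Finset.disjoint_left.mp hBC h1)
    · rw [hfw, hfw] at hxy; rw [γinj hxy]
  have hsurj : ∀ y ∈ A ∪ B ∪ C, ∃ x ∈ W, f x = y := by
    intro y hy
    rcases Finset.mem_union.mp hy with hy' | hy'
    · rcases Finset.mem_union.mp hy' with hy'' | hy''
      · obtain ⟨i, rfl⟩ := αsurj y hy''
        exact ⟨u i, hWu i, hfu i⟩
      · obtain ⟨j, rfl⟩ := βsurj y hy''
        exact ⟨v j, hWv j, hfv j⟩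
    · obtain ⟨m, rfl⟩ := γsurj y hy'
      exact ⟨w m, hWw m, hfw m⟩
  -- the induced subgraph
  have hH0 : H.induce W ∈ ℋ := hH.2 H hHmem W
  have hV0 : (H.induce W).verts = W := by
    show H.verts ∩ W = W
    exact Finset.inter_eq_right.mpr hWsub
  have hE0 : (H.induce W).edges = H.edges.filter (fun e => e ⊆ W) := rfl
  have himg3 : ∀ x y z : ℕ, ({x, y, z} : Finset ℕ).image f = {f x, f y, f z} := by
    intro x y z
    rw [Finset.image_insert, Finset.image_insert, Finset.image_singleton]
  -- the target 3-graph
  refine ⟨⟨A ∪ B ∪ C, (H.induce W).edges.image (Finset.image f), ?_⟩, ?_, rfl, ?_⟩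
  · intro e' he'
    obtain ⟨e, he, rfl⟩ := Finset.mem_image.mp he'
    rw [hE0, Finset.mem_filter] at he
    obtain ⟨heE, heW⟩ := he
    constructor
    · intro y hy
      obtain ⟨x, hx, rfl⟩ := Finset.mem_image.mp hy
      exact hmapsto x (heW hx)
    · rw [Finset.card_image_of_injOn (hinj.mono (Finset.coe_subset.mpr heW))]
      exact (H.edges_sub e heE).2
  · -- membership in ℋ via the isomorphism
    refine hH.1 (H.induce W) _ ?_ hH0
    refine ⟨f, ?_, ?_⟩
    · rw [hV0]
      refine ⟨fun x hx => Finset.mem_coe.mpr (hmapsto x (Finset.mem_coe.mp hx)), hinj, ?_⟩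
      intro y hy
      obtain ⟨x, hx, hfx⟩ := hsurj y (Finset.mem_coe.mp hy)
      exact ⟨x, Finset.mem_coe.mpr hx, hfx⟩
    · rw [hV0]
      intro x hx y hy z hz
      have hxyzW : ({x, y, z} : Finset ℕ) ⊆ W := by
        intro t ht
        simp only [Finset.mem_insert, Finset.mem_singleton] at ht
        rcases ht with rfl | rfl | rfl <;> assumption
      constructor
      · intro hmem
        exact Finset.mem_image.mpr ⟨{x, y, z}, hmem, himg3 x y z⟩
      · intro hmem
        obtain ⟨e, he, heq⟩ := Finset.mem_image.mp hmem
        have heW : e ⊆ W := by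
          rw [hE0, Finset.mem_filter] at he
          exact he.2
        have : e = {x, y, z} :=
          img_inj_eq hinj heW hxyzW (heq.trans (himg3 x y z).symm)
        rwa [this] at he
  · -- the trace is exactly E
    ext e
    simp only [Finset.mem_inter]
    constructor
    · rintro ⟨heH2, heK⟩
      simp only [K3Parts, Finset.mem_image, Finset.mem_product] at heK
      obtain ⟨⟨x, y, z⟩, ⟨hx, hy, hz⟩, rfl⟩ := heK
      obtain ⟨i, rfl⟩ := αsurj x hx
      obtain ⟨j, rfl⟩ := βsurj y hy
      obtain ⟨m, rfl⟩ := γsurj z hz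
      obtain ⟨e₀, he₀, heq⟩ := Finset.mem_image.mp heH2
      rw [hE0, Finset.mem_filter] at he₀
      have himg' : ({u i, v j, w m} : Finset ℕ).image f = {α i, β j, γ m} := by
        rw [himg3, hfu, hfv, hfw]
      have hsub1 : ({u i, v j, w m} : Finset ℕ) ⊆ W := by
        intro t ht
        simp only [Finset.mem_insert, Finset.mem_singleton] at ht
        rcases ht with rfl | rfl | rfl
        · exact hWu i
        · exact hWv j
        · exact hWw m
      have he₀eq : e₀ = {u i, v j, w m} :=
        img_inj_eq hinj he₀.2 hsub1 (heq.trans himg'.symm)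
      rw [he₀eq] at he₀
      exact (hmain i j m).mp he₀.1
    · intro heE
      have heK := hE heE
      refine ⟨?_, heK⟩
      simp only [K3Parts, Finset.mem_image, Finset.mem_product] at heK
      obtain ⟨⟨x, y, z⟩, ⟨hx, hy, hz⟩, heq⟩ := heK
      obtain ⟨i, rfl⟩ := αsurj x hx
      obtain ⟨j, rfl⟩ := βsurj y hy
      obtain ⟨m, rfl⟩ := γsurj z hz
      subst heq
      have hedge' : ({u i, v j, w m} : Finset ℕ) ∈ H.edges := (hmain i j m).mpr heE
      have hsub1 : ({u i, v j, w m} : Finset ℕ) ⊆ W := by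
        intro t ht
        simp only [Finset.mem_insert, Finset.mem_singleton] at ht
        rcases ht with rfl | rfl | rfl
        · exact hWu i
        · exact hWv j
        · exact hWw m
      have hfilt : ({u i, v j, w m} : Finset ℕ) ∈ (H.induce W).edges := by
        rw [hE0, Finset.mem_filter]
        exact ⟨hedge', hsub1⟩
      refine Finset.mem_image.mpr ⟨{u i, v j, w m}, hfilt, ?_⟩
      rw [himg3, hfu, hfv, hfw]
end

section
/- For all k≥1 there is N such that the following holds: every irreducible bigraph G=(U,V;E) with min{|U|,|V|}≥N contains an induced copy of H(k), M(k), or M̄(k). -/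
open scoped Classical
open Finset

set_option maxHeartbeats 1000000

/-- Pigeonhole for boolean colorings of `range n`. -/
lemma pigeonBool (f : ℕ → Bool) (n t : ℕ) (h : t + t ≤ n) :
    ∃ (S : Finset ℕ) (β : Bool), S ⊆ Finset.range n ∧ t ≤ S.card ∧ ∀ i ∈ S, f i = β := by
  classical
  have hsum : ((Finset.range n).filter (fun i => f i = true)).card +
      ((Finset.range n).filter (fun i => ¬ (f i = true))).card = n := by
    rw [Finset.card_filter_add_card_filter_not, Finset.card_range]
  rcases le_or_gt t ((Finset.range n).filter (fun i => f i = true)).card with h1 | h1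
  · exact ⟨(Finset.range n).filter (fun i => f i = true), true, Finset.filter_subset _ _, h1,
      fun i hi => (Finset.mem_filter.mp hi).2⟩
  · refine ⟨(Finset.range n).filter (fun i => ¬ (f i = true)), false, Finset.filter_subset _ _, by omega, fun i hi => ?_⟩
    have := (Finset.mem_filter.mp hi).2
    simpa using this

/-- Pigeonhole restricted to a subset of the range: a version picking an exact-size subset. -/
lemma chainLemma (P : ℕ → ℕ → Bool) :
    ∀ (r : ℕ) (A : Finset ℕ), 2 ^ r ≤ A.card →
    ∃ (x : ℕ → ℕ) (c : ℕ → Bool),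
      (∀ i, i < r → x i ∈ A) ∧
      (∀ i j, i < j → j < r → x i < x j) ∧
      (∀ i j, i < j → j < r → P (x i) (x j) = c i) := by
  intro r
  induction r with
  | zero =>
    intro A _
    exact ⟨id, fun _ => true, fun i hi => absurd hi (by omega),
      fun i j hij hj => absurd hj (by omega), fun i j hij hj => absurd hj (by omega)⟩
  | succ r ih =>
    intro A hA
    have hpow : (0:ℕ) < 2 ^ (r + 1) := by positivity
    have hne : A.Nonempty := Finset.card_pos.mp (by omega)
    set a := A.min' hne with ha_def
    have haA : a ∈ A := A.min'_mem hne
    have hsum : ((A.erase a).filter (fun y => P a y = true)).card +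
        ((A.erase a).filter (fun y => ¬ (P a y = true))).card = (A.erase a).card := by
      rw [Finset.card_filter_add_card_filter_not]
    have herase : (A.erase a).card = A.card - 1 := Finset.card_erase_of_mem haA
    have hsplit : 2 ^ (r+1) = 2 ^ r + 2 ^ r := by ring
    -- pick the big side
    obtain ⟨big, c₀, hbigsub, hbigcard, hbigP⟩ :
        ∃ (big : Finset ℕ) (c₀ : Bool), big ⊆ A.erase a ∧ 2 ^ r ≤ big.card ∧
          ∀ y ∈ big, P a y = c₀ := by
      rcases le_or_gt (2 ^ r) ((A.erase a).filter (fun y => P a y = true)).card with h1 | h1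
      · exact ⟨_, true, Finset.filter_subset _ _, h1, fun y hy => (Finset.mem_filter.mp hy).2⟩
      · refine ⟨(A.erase a).filter (fun y => ¬ (P a y = true)), false, Finset.filter_subset _ _,
          by omega, fun y hy => ?_⟩
        have := (Finset.mem_filter.mp hy).2
        simpa using this
    obtain ⟨x', c', h1, h2, h3⟩ := ih big hbigcard
    refine ⟨fun n => if n = 0 then a else x' (n - 1), fun n => if n = 0 then c₀ else c' (n - 1),
      ?_, ?_, ?_⟩
    · intro i hi
      rcases Nat.eq_zero_or_pos i with rfl | hipos
      · simpa using haA
      · have : x' (i-1) ∈ big := h1 (i-1) (by omega)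
        simp only [if_neg (by omega : ¬ i = 0)]
        exact A.erase_subset a (hbigsub this)
    · intro i j hij hj
      have hxj : x' (j-1) ∈ big := h1 (j-1) (by omega)
      rcases Nat.eq_zero_or_pos i with rfl | hipos
      · simp only [if_pos rfl, if_neg (by omega : ¬ j = 0)]
        have hmem : x' (j-1) ∈ A.erase a := hbigsub hxj
        have h4 : x' (j-1) ∈ A := A.erase_subset a hmem
        have h5 : x' (j-1) ≠ a := Finset.ne_of_mem_erase hmem
        exact lt_of_le_of_ne (A.min'_le _ h4) (Ne.symm h5)
      · simp only [if_neg (by omega : ¬ i = 0), if_neg (by omega : ¬ j = 0)]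
        exact h2 (i-1) (j-1) (by omega) (by omega)
    · intro i j hij hj
      rcases Nat.eq_zero_or_pos i with rfl | hipos
      · simp only [if_pos rfl, if_neg (by omega : ¬ j = 0)]
        exact hbigP _ (h1 (j-1) (by omega))
      · simp only [if_neg (by omega : ¬ i = 0), if_neg (by omega : ¬ j = 0)]
        exact h3 (i-1) (j-1) (by omega) (by omega)

/-- Decision-tree extraction from a set with pairwise-distinct neighborhoods. -/
lemma treeLemma (G : Bigraph) :
    ∀ (m : ℕ) (A : Finset ℕ),
      (∀ a ∈ A, ∀ a' ∈ A, a ≠ a' → ∃ w, ¬(((a, w) ∈ G.edges) ↔ ((a', w) ∈ G.edges))) →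
      2 ^ m ≤ A.card →
      ∃ (u v : ℕ → ℕ) (b : ℕ → Bool),
        (∀ i, i < m → u i ∈ A) ∧
        (∀ i, i < m → v i ∈ G.right) ∧
        (∀ i j, i < j → j < m → ((u j, v i) ∈ G.edges ↔ b i = true)) ∧
        (∀ i, i < m → ((u i, v i) ∈ G.edges ↔ b i = false)) := by
  intro m
  induction m with
  | zero =>
    intro A _ _
    exact ⟨id, id, fun _ => true, fun i hi => absurd hi (by omega),
      fun i hi => absurd hi (by omega), fun i j hij hj => absurd hj (by omega),
      fun i hi => absurd hi (by omega)⟩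
  | succ m ih =>
    intro A hA hcard
    have h2 : 1 < A.card := by
      have : (2:ℕ) ≤ 2 ^ (m+1) := Nat.one_lt_two_pow (by omega)
      omega
    obtain ⟨a, ha, a', ha', hne⟩ := Finset.one_lt_card.mp h2
    obtain ⟨w, hw⟩ := hA a ha a' ha' hne
    have hsum : (A.filter (fun y => (y, w) ∈ G.edges)).card +
        (A.filter (fun y => ¬ ((y, w) ∈ G.edges))).card = A.card :=
      Finset.card_filter_add_card_filter_not _
    have hw_right : w ∈ G.right := by
      by_cases hcase : (a, w) ∈ G.edges
      · exact (Finset.mem_product.mp (G.edges_sub hcase)).2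
      · have : (a', w) ∈ G.edges := by tauto
        exact (Finset.mem_product.mp (G.edges_sub this)).2
    have hsplit : 2 ^ (m+1) = 2 ^ m + 2 ^ m := by ring
    obtain ⟨big, b₀, u₀, hbigsub, hu₀A, hbigcard, hbigE, hu₀E⟩ :
        ∃ (big : Finset ℕ) (b₀ : Bool) (u₀ : ℕ), big ⊆ A ∧ u₀ ∈ A ∧ 2 ^ m ≤ big.card ∧
          (∀ y ∈ big, ((y, w) ∈ G.edges ↔ b₀ = true)) ∧
          ((u₀, w) ∈ G.edges ↔ b₀ = false) := by
      by_cases hcase : (a, w) ∈ G.edges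
      · have hcase' : (a', w) ∉ G.edges := by tauto
        rcases le_or_gt (2 ^ m) (A.filter (fun y => (y, w) ∈ G.edges)).card with h1 | h1
        · refine ⟨_, true, a', Finset.filter_subset _ _, ha', h1, fun y hy => ?_, ?_⟩
          · simpa using (Finset.mem_filter.mp hy).2
          · simpa using hcase'
        · refine ⟨A.filter (fun y => ¬ ((y, w) ∈ G.edges)), false, a, Finset.filter_subset _ _, ha,
            by omega, fun y hy => ?_, ?_⟩
          · have := (Finset.mem_filter.mp hy).2
            simpa using this
          · simpa using hcase
      · have hcase' : (a', w) ∈ G.edges := by tauto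
        rcases le_or_gt (2 ^ m) (A.filter (fun y => (y, w) ∈ G.edges)).card with h1 | h1
        · refine ⟨_, true, a, Finset.filter_subset _ _, ha, h1, fun y hy => ?_, ?_⟩
          · simpa using (Finset.mem_filter.mp hy).2
          · simpa using hcase
        · refine ⟨A.filter (fun y => ¬ ((y, w) ∈ G.edges)), false, a', Finset.filter_subset _ _, ha',
            by omega, fun y hy => ?_, ?_⟩
          · have := (Finset.mem_filter.mp hy).2
            simpa using this
          · simpa using hcase'
    obtain ⟨u', v', b', h1, h2', h3, h4⟩ := ih big
      (fun x hx x' hx' hxx => hA x (hbigsub hx) x' (hbigsub hx') hxx) hbigcard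
    refine ⟨fun n => if n = 0 then u₀ else u' (n-1),
      fun n => if n = 0 then w else v' (n-1),
      fun n => if n = 0 then b₀ else b' (n-1), ?_, ?_, ?_, ?_⟩
    · intro i hi
      rcases Nat.eq_zero_or_pos i with rfl | hipos
      · simpa using hu₀A
      · simp only [if_neg (by omega : ¬ i = 0)]
        exact hbigsub (h1 (i-1) (by omega))
    · intro i hi
      rcases Nat.eq_zero_or_pos i with rfl | hipos
      · simpa using hw_right
      · simp only [if_neg (by omega : ¬ i = 0)]
        exact h2' (i-1) (by omega)
    · intro i j hij hj
      rcases Nat.eq_zero_or_pos i with rfl | hipos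
      · simp only [if_pos rfl, if_neg (by omega : ¬ j = 0)]
        exact hbigE _ (h1 (j-1) (by omega))
      · simp only [if_neg (by omega : ¬ i = 0), if_neg (by omega : ¬ j = 0)]
        exact h3 (i-1) (j-1) (by omega) (by omega)
    · intro i hi
      rcases Nat.eq_zero_or_pos i with rfl | hipos
      · simpa using hu₀E
      · simp only [if_neg (by omega : ¬ i = 0)]
        exact h4 (i-1) (by omega)
/-- Large irreducible bigraphs contain `H(k)`, `M(k)`, or `M̄(k)`. -/
theorem stmt_7 (k : ℕ) (hk : 1 ≤ k) :
    ∃ N : ℕ, ∀ G : Bigraph, G.Irreducible →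
      N ≤ G.left.card → N ≤ G.right.card →
      (G.HasInducedPattern k fun a b => a ≤ b) ∨
      (G.HasInducedPattern k fun a b => a = b) ∨
      (G.HasInducedPattern k fun a b => a ≠ b) := by
  classical
  refine ⟨2 ^ 2 ^ (2 * k + 3), ?_⟩
  intro G hirr hL _
  have hdist : ∀ a ∈ G.left, ∀ a' ∈ G.left, a ≠ a' →
      ∃ w, ¬(((a, w) ∈ G.edges) ↔ ((a', w) ∈ G.edges)) := by
    intro a ha a' ha' hne
    by_contra hcon
    push_neg at hcon
    exact hne (hirr.1 a ha a' ha' hcon)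
  obtain ⟨u, v, b, humem, hvmem, htri, hdiag⟩ :=
    treeLemma G (2 ^ (2 * k + 3)) G.left hdist hL
  obtain ⟨A₁, β, hA₁sub, hA₁card, hA₁b⟩ :=
    pigeonBool b (2 ^ (2 * k + 3)) (2 ^ (2 * k + 2)) (by
      have : (2:ℕ) ^ (2 * k + 3) = 2 ^ (2 * k + 2) + 2 ^ (2 * k + 2) := by ring
      omega)
  obtain ⟨x, c, hxmem, hxmono, hxcol⟩ :=
    chainLemma (fun i j => decide ((u i, v j) ∈ G.edges)) (2 * k + 2) A₁ hA₁card
  obtain ⟨S, γ, hSsub, hScard, hSc⟩ := pigeonBool c (2 * k + 2) (k + 1) (by omega)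
  obtain ⟨S', hS'sub, hS'card⟩ := Finset.exists_subset_card_eq hScard
  set e : Fin (k + 1) ↪o ℕ := S'.orderEmbOfFin hS'card with he
  have he_lt : ∀ a : Fin (k + 1), e a < 2 * k + 2 := fun a =>
    Finset.mem_range.mp (hSsub (hS'sub (S'.orderEmbOfFin_mem hS'card a)))
  have hec : ∀ a : Fin (k + 1), c (e a) = γ := fun a =>
    hSc _ (hSsub (hS'sub (S'.orderEmbOfFin_mem hS'card a)) |> Finset.mem_range.mp |> fun _ =>
      hS'sub (S'.orderEmbOfFin_mem hS'card a))
  have hec' : ∀ a : Fin (k + 1), c (e a) = γ := fun a => hSc _ (hS'sub (S'.orderEmbOfFin_mem hS'card a))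
  set φ : Fin (k + 1) → ℕ := fun a => x (e a) with hφ
  have hφA : ∀ a, φ a ∈ A₁ := fun a => hxmem _ (he_lt a)
  have hφm : ∀ a, φ a < 2 ^ (2 * k + 3) := fun a => Finset.mem_range.mp (hA₁sub (hφA a))
  have hφb : ∀ a, b (φ a) = β := fun a => hA₁b _ (hφA a)
  have hφmono : ∀ a c' : Fin (k + 1), a < c' → φ a < φ c' := fun a c' h =>
    hxmono _ _ (e.strictMono h) (he_lt c')
  have hUL : ∀ a, u (φ a) ∈ G.left := fun a => humem _ (hφm a)
  have hVR : ∀ a, v (φ a) ∈ G.right := fun a => hvmem _ (hφm a)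
  have fact_lt : ∀ a c' : Fin (k + 1), a < c' →
      ((u (φ a), v (φ c')) ∈ G.edges ↔ γ = true) := by
    intro a c' h
    have hcol := hxcol (e a) (e c') (e.strictMono h) (he_lt c')
    rw [hec' a] at hcol
    have : (decide ((u (φ a), v (φ c')) ∈ G.edges) = true) ↔ γ = true := by rw [hcol]
    simpa [decide_eq_true_eq] using this
  have fact_eq : ∀ a : Fin (k + 1), ((u (φ a), v (φ a)) ∈ G.edges ↔ β = false) := by
    intro a
    rw [← hφb a]
    exact hdiag _ (hφm a)
  have fact_gt : ∀ a c' : Fin (k + 1), c' < a →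
      ((u (φ a), v (φ c')) ∈ G.edges ↔ β = true) := by
    intro a c' h
    rw [← hφb c']
    exact htri (φ c') (φ a) (hφmono c' a h) (hφm a)
  cases β with
  | false =>
    cases γ with
    | true =>
      -- H(k): edge iff row ≤ column
      left
      refine ⟨fun a => u (φ a.castSucc), fun b' => v (φ b'.castSucc),
        fun a => hUL _, fun b' => hVR _, ?_⟩
      intro a b'
      beta_reduce
      rcases lt_trichotomy a.castSucc b'.castSucc with h | h | h
      · rw [fact_lt _ _ h]
        simp only [Fin.castSucc_lt_castSucc_iff] at h
        simpa using le_of_lt h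
      · rw [h, fact_eq]
        simp only [Fin.castSucc_inj] at h
        simpa using le_of_eq h
      · rw [fact_gt _ _ h]
        simp only [Fin.castSucc_lt_castSucc_iff] at h
        simpa using not_le.mpr h
    | false =>
      -- M(k): edge iff row = column
      right; left
      refine ⟨fun a => u (φ a.castSucc), fun b' => v (φ b'.castSucc),
        fun a => hUL _, fun b' => hVR _, ?_⟩
      intro a b'
      beta_reduce
      rcases lt_trichotomy a.castSucc b'.castSucc with h | h | h
      · rw [fact_lt _ _ h]
        simp only [Fin.castSucc_lt_castSucc_iff] at h
        simpa using ne_of_lt h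
      · rw [h, fact_eq]
        simp only [Fin.castSucc_inj] at h
        simpa using h
      · rw [fact_gt _ _ h]
        simp only [Fin.castSucc_lt_castSucc_iff] at h
        simpa using (ne_of_lt h).symm
  | true =>
    cases γ with
    | true =>
      -- complement of matching: edge iff row ≠ column
      right; right
      refine ⟨fun a => u (φ a.castSucc), fun b' => v (φ b'.castSucc),
        fun a => hUL _, fun b' => hVR _, ?_⟩
      intro a b'
      beta_reduce
      rcases lt_trichotomy a.castSucc b'.castSucc with h | h | h
      · rw [fact_lt _ _ h]
        simp only [Fin.castSucc_lt_castSucc_iff] at h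
        simpa using ne_of_lt h
      · rw [h, fact_eq]
        simp only [Fin.castSucc_inj] at h
        simpa using h
      · rw [fact_gt _ _ h]
        simp only [Fin.castSucc_lt_castSucc_iff] at h
        simpa using (ne_of_lt h).symm
    | false =>
      -- reversed chain: edge iff column < row; reverse indices to get H(k)
      left
      refine ⟨fun a => u (φ ⟨k - a.val, by omega⟩), fun b' => v (φ ⟨k - 1 - b'.val, by omega⟩),
        fun a => hUL _, fun b' => hVR _, ?_⟩
      intro a b'
      beta_reduce
      have ha := a.isLt
      have hb := b'.isLt
      rcases lt_trichotomy (⟨k - a.val, by omega⟩ : Fin (k + 1)) (⟨k - 1 - b'.val, by omega⟩ : Fin (k + 1)) with h | h | h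
      · rw [fact_lt _ _ h]
        rw [Fin.mk_lt_mk] at h
        have : ¬ (a ≤ b') := by rw [Fin.le_def]; omega
        simpa using this
      · rw [h, fact_eq]
        rw [Fin.mk_eq_mk] at h
        have : ¬ (a ≤ b') := by rw [Fin.le_def]; omega
        simpa using this
      · rw [fact_gt _ _ h]
        rw [Fin.mk_lt_mk] at h
        have : a ≤ b' := by rw [Fin.le_def]; omega
        simpa using this
end

section
/- For every C≥1 and δ>0 there is ε*>0 such that for all 0<ε<ε* the following holds. Assume G=(U,V;E₀,E₁,E₂) is an edge-colored bigraph such that |E₂| ≤ ε|U||V| and, for every irreducible bigraph R∈Irr(C), G contains no E₀/E₁-copy of R. Then there is an integer m<C, vertices x₁,…,x_m∈U, and a set U₀⊆U with |U₀| ≤ √ε·|U|, such that for all u∈U∖U₀: |N_{E₂}(u)| ≤ √ε·|V|, and there is some 1≤i≤m with max{|N_{E₁}(u) Δ N_{E₁}(x_i)|, |N_{E₀}(u) Δ N_{E₀}(x_i)|} ≤ δ|V|. -/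
open scoped Classical
open Finset

set_option maxHeartbeats 1000000

lemma sum_nbhd_le (V : Finset ℕ) (E : Finset (ℕ × ℕ)) (S : Finset ℕ) :
    ∑ w ∈ S, (Nbhd V E w).card ≤ E.card := by
  classical
  have h1 : (E.filter (fun p => p.1 ∈ S ∧ p.2 ∈ V)).card
      = ∑ w ∈ S, ((E.filter (fun p => p.1 ∈ S ∧ p.2 ∈ V)).filter
          (fun p => p.1 = w)).card := by
    apply Finset.card_eq_sum_card_fiberwise
    intro p hp
    exact (Finset.mem_filter.mp hp).2.1
  have h2 : ∀ w ∈ S, ((E.filter (fun p => p.1 ∈ S ∧ p.2 ∈ V)).filter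
          (fun p => p.1 = w)) = (Nbhd V E w).image (fun v => (w, v)) := by
    intro w hw
    ext ⟨a, b⟩
    simp only [Finset.mem_filter, Finset.mem_image, Nbhd]
    constructor
    · rintro ⟨⟨hE, hS', hV⟩, rfl⟩
      exact ⟨b, ⟨hV, hE⟩, rfl⟩
    · rintro ⟨v, ⟨hv, hE⟩, h⟩
      cases h
      exact ⟨⟨hE, hw, hv⟩, rfl⟩
  calc ∑ w ∈ S, (Nbhd V E w).card
      = ∑ w ∈ S, ((Nbhd V E w).image (fun v => (w, v))).card := by
        refine Finset.sum_congr rfl fun w hw => ?_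
        rw [Finset.card_image_of_injective _ (fun a b h => by cases h; rfl)]
    _ = (E.filter (fun p => p.1 ∈ S ∧ p.2 ∈ V)).card := by
        rw [h1]; exact Finset.sum_congr rfl fun w hw => by rw [h2 w hw]
    _ ≤ E.card := Finset.card_le_card (Finset.filter_subset _ _)

/-- `a` and `b` are `δ`-far in `G`: one of the two symmetric differences is large. -/
def FarP (G : ECBigraph) (δ : ℝ) (a b : ℕ) : Prop :=
  δ * G.right.card < (((Nbhd G.right G.E1 a \ Nbhd G.right G.E1 b) ∪
    (Nbhd G.right G.E1 b \ Nbhd G.right G.E1 a)).card : ℝ) ∨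
  δ * G.right.card < (((Nbhd G.right G.E0 a \ Nbhd G.right G.E0 b) ∪
    (Nbhd G.right G.E0 b \ Nbhd G.right G.E0 a)).card : ℝ)

lemma farP_symm {G : ECBigraph} {δ : ℝ} {a b : ℕ} (h : FarP G δ a b) : FarP G δ b a := by
  unfold FarP at h ⊢
  rcases h with h | h
  · left; rwa [Finset.union_comm]
  · right; rwa [Finset.union_comm]

lemma key_lemma (G : ECBigraph) (δ sε : ℝ) (S : Finset ℕ)
    (hS : S ⊆ G.left)
    (hdeg : ∀ w ∈ S, ((Nbhd G.right G.E2 w).card : ℝ) ≤ sε * G.right.card)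
    (hCs : (S.card : ℝ) * (sε * G.right.card) ≤ δ * G.right.card)
    (hFar : ∀ a ∈ S, ∀ b ∈ S, a ≠ b → FarP G δ a b) :
    ∃ R : Bigraph, R.Irreducible ∧ R.left = S ∧ G.Copy01 R := by
  classical
  set Bad : Finset ℕ := S.biUnion (fun w => Nbhd G.right G.E2 w) with hBadDef
  have hBadcard : (Bad.card : ℝ) ≤ δ * G.right.card := by
    have h0 : Bad.card ≤ ∑ w ∈ S, (Nbhd G.right G.E2 w).card :=
      Finset.card_biUnion_le
    have h1 : (Bad.card : ℝ) ≤ ∑ w ∈ S, ((Nbhd G.right G.E2 w).card : ℝ) := by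
      exact_mod_cast h0
    have h2 : ∑ w ∈ S, ((Nbhd G.right G.E2 w).card : ℝ)
        ≤ ∑ w ∈ S, sε * G.right.card := Finset.sum_le_sum hdeg
    rw [Finset.sum_const, nsmul_eq_mul] at h2
    linarith
  have pick : ∀ Δ : Finset ℕ, Δ ⊆ G.right → δ * G.right.card < (Δ.card : ℝ) →
      ∃ v ∈ Δ, v ∉ Bad := by
    intro Δ hsub hlt
    by_contra h
    push_neg at h
    have hle : (Δ.card : ℝ) ≤ (Bad.card : ℝ) := by
      exact_mod_cast Finset.card_le_card (fun v hv => h v hv)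
    linarith
  have key : ∀ u ∈ S, ∀ u' ∈ S, u ≠ u' → ∃ v, v ∈ G.right ∧
      ¬(((u, v) ∈ G.E1) ↔ ((u', v) ∈ G.E1)) ∧ ∀ w ∈ S, (w, v) ∉ G.E2 := by
    intro u hu u' hu' hne
    have hgood : ∀ v ∈ G.right, v ∉ Bad → ∀ w ∈ S, (w, v) ∉ G.E2 := by
      intro v hv hvb w hw hmem
      exact hvb (Finset.mem_biUnion.mpr ⟨w, hw, Finset.mem_filter.mpr ⟨hv, hmem⟩⟩)
    rcases hFar u hu u' hu' hne with hbig | hbig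
    · set Δ := (Nbhd G.right G.E1 u \ Nbhd G.right G.E1 u') ∪
        (Nbhd G.right G.E1 u' \ Nbhd G.right G.E1 u) with hΔ
      have hΔsub : Δ ⊆ G.right := by
        apply Finset.union_subset <;>
          exact Finset.sdiff_subset.trans (Finset.filter_subset _ _)
      obtain ⟨v, hvΔ, hvB⟩ := pick Δ hΔsub hbig
      have hvV : v ∈ G.right := hΔsub hvΔ
      refine ⟨v, hvV, ?_, hgood v hvV hvB⟩
      rcases Finset.mem_union.mp hvΔ with h1 | h1
      · obtain ⟨hin, hout⟩ := Finset.mem_sdiff.mp h1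
        have hE1u : (u, v) ∈ G.E1 := (Finset.mem_filter.mp hin).2
        have hE1u' : (u', v) ∉ G.E1 := fun hc => hout (Finset.mem_filter.mpr ⟨hvV, hc⟩)
        exact fun hiff => hE1u' (hiff.mp hE1u)
      · obtain ⟨hin, hout⟩ := Finset.mem_sdiff.mp h1
        have hE1u' : (u', v) ∈ G.E1 := (Finset.mem_filter.mp hin).2
        have hE1u : (u, v) ∉ G.E1 := fun hc => hout (Finset.mem_filter.mpr ⟨hvV, hc⟩)
        exact fun hiff => hE1u (hiff.mpr hE1u')
    · set Δ := (Nbhd G.right G.E0 u \ Nbhd G.right G.E0 u') ∪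
        (Nbhd G.right G.E0 u' \ Nbhd G.right G.E0 u) with hΔ
      have hΔsub : Δ ⊆ G.right := by
        apply Finset.union_subset <;>
          exact Finset.sdiff_subset.trans (Finset.filter_subset _ _)
      obtain ⟨v, hvΔ, hvB⟩ := pick Δ hΔsub hbig
      have hvV : v ∈ G.right := hΔsub hvΔ
      have hnE2 : ∀ w ∈ S, (w, v) ∉ G.E2 := hgood v hvV hvB
      have conv : ∀ a ∈ S, ((a, v) ∈ G.E0 ↔ (a, v) ∉ G.E1) := by
        intro a ha
        constructor
        · intro h0 h1
          exact (Finset.disjoint_left.mp G.disj01 h0) h1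
        · intro h1
          have hin : (a, v) ∈ G.E0 ∪ G.E1 ∪ G.E2 := by
            rw [G.cover]; exact Finset.mem_product.mpr ⟨hS ha, hvV⟩
          rcases Finset.mem_union.mp hin with h' | h'
          · rcases Finset.mem_union.mp h' with h'' | h''
            · exact h''
            · exact absurd h'' h1
          · exact absurd h' (hnE2 a ha)
      refine ⟨v, hvV, ?_, hnE2⟩
      rcases Finset.mem_union.mp hvΔ with h1 | h1
      · obtain ⟨hin, hout⟩ := Finset.mem_sdiff.mp h1
        have hE0u : (u, v) ∈ G.E0 := (Finset.mem_filter.mp hin).2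
        have hE0u' : (u', v) ∉ G.E0 := fun hc => hout (Finset.mem_filter.mpr ⟨hvV, hc⟩)
        have h1u : (u, v) ∉ G.E1 := (conv u hu).mp hE0u
        have h1u' : (u', v) ∈ G.E1 := by
          by_contra hc
          exact hE0u' ((conv u' hu').mpr hc)
        exact fun hiff => h1u (hiff.mpr h1u')
      · obtain ⟨hin, hout⟩ := Finset.mem_sdiff.mp h1
        have hE0u' : (u', v) ∈ G.E0 := (Finset.mem_filter.mp hin).2
        have hE0u : (u, v) ∉ G.E0 := fun hc => hout (Finset.mem_filter.mpr ⟨hvV, hc⟩)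
        have h1u' : (u', v) ∉ G.E1 := (conv u' hu').mp hE0u'
        have h1u : (u, v) ∈ G.E1 := by
          by_contra hc
          exact hE0u ((conv u hu).mpr hc)
        exact fun hiff => h1u' (hiff.mp h1u)
  -- choice of distinguishing vertices
  let vf : ℕ × ℕ → ℕ := fun p =>
    if h : p.1 ∈ S ∧ p.2 ∈ S ∧ p.1 ≠ p.2 then
      (key p.1 h.1 p.2 h.2.1 h.2.2).choose else 0
  have hvf : ∀ p : ℕ × ℕ, (h : p.1 ∈ S ∧ p.2 ∈ S ∧ p.1 ≠ p.2) →
      vf p ∈ G.right ∧ ¬(((p.1, vf p) ∈ G.E1) ↔ ((p.2, vf p) ∈ G.E1)) ∧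
        ∀ w ∈ S, (w, vf p) ∉ G.E2 := by
    intro p h
    have hspec := (key p.1 h.1 p.2 h.2.1 h.2.2).choose_spec
    simp only [vf, dif_pos h]
    exact hspec
  let T0 : Finset ℕ := ((S ×ˢ S).filter (fun p => p.1 ≠ p.2)).image vf
  have hT0 : ∀ v ∈ T0, v ∈ G.right ∧ ∀ w ∈ S, (w, v) ∉ G.E2 := by
    intro v hv
    obtain ⟨p, hp, rfl⟩ := Finset.mem_image.mp hv
    rw [Finset.mem_filter, Finset.mem_product] at hp
    obtain h := hvf p ⟨hp.1.1, hp.1.2, hp.2⟩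
    exact ⟨h.1, h.2.2⟩
  let pat : ℕ → Finset ℕ := fun v => S.filter (fun w => (w, v) ∈ G.E1)
  have hpatmem : ∀ a z, a ∈ S → (a ∈ pat z ↔ (a, z) ∈ G.E1) := by
    intro a z ha; simp [pat, ha]
  let repf : Finset ℕ → ℕ := fun Q => if h : ∃ v ∈ T0, pat v = Q then h.choose else 0
  let T : Finset ℕ := (T0.image pat).image repf
  have hrep : ∀ Q ∈ T0.image pat, repf Q ∈ T0 ∧ pat (repf Q) = Q := by
    intro Q hQ
    obtain ⟨v, hv, hvQ⟩ := Finset.mem_image.mp hQ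
    have h : ∃ v ∈ T0, pat v = Q := ⟨v, hv, hvQ⟩
    simp only [repf, dif_pos h]
    exact ⟨h.choose_spec.1, h.choose_spec.2⟩
  have hTsub : T ⊆ T0 := by
    intro w hw
    obtain ⟨Q, hQ, rfl⟩ := Finset.mem_image.mp hw
    exact (hrep Q hQ).1
  have hpatinj : ∀ w ∈ T, ∀ w' ∈ T, pat w = pat w' → w = w' := by
    intro w hw w' hw' hpp
    obtain ⟨Q, hQ, rfl⟩ := Finset.mem_image.mp hw
    obtain ⟨Q', hQ', rfl⟩ := Finset.mem_image.mp hw'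
    have hQQ : Q = Q' := by rw [← (hrep Q hQ).2, ← (hrep Q' hQ').2, hpp]
    rw [hQQ]
  have hcover : ∀ v ∈ T0, ∃ w ∈ T, pat w = pat v := by
    intro v hv
    exact ⟨repf (pat v), Finset.mem_image_of_mem _ (Finset.mem_image_of_mem _ hv),
      (hrep _ (Finset.mem_image_of_mem _ hv)).2⟩
  refine ⟨⟨S, T, (S ×ˢ T).filter (fun p => p ∈ G.E1), Finset.filter_subset _ _⟩, ?_, rfl, ?_⟩
  · have hedge : ∀ a b : ℕ, ((a, b) ∈ (S ×ˢ T).filter (fun p => p ∈ G.E1)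
        ↔ a ∈ S ∧ b ∈ T ∧ (a, b) ∈ G.E1) := by
      intro a b
      simp [Finset.mem_filter, Finset.mem_product, and_assoc]
    constructor
    · intro u hu u' hu' hiff
      by_contra hne
      have hp : (u, u').1 ∈ S ∧ (u, u').2 ∈ S ∧ (u, u').1 ≠ (u, u').2 := ⟨hu, hu', hne⟩
      obtain ⟨hvV, hdist, hnE2⟩ := hvf (u, u') hp
      have hvT0 : vf (u, u') ∈ T0 := Finset.mem_image_of_mem vf
        (by rw [Finset.mem_filter, Finset.mem_product]; exact ⟨⟨hu, hu'⟩, hne⟩)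
      obtain ⟨w, hwT, hpw⟩ := hcover _ hvT0
      have h1 : (u, vf (u, u')) ∈ G.E1 ↔ (u, w) ∈ G.E1 := by
        rw [← hpatmem u _ hu, ← hpatmem u w hu, hpw]
      have h1' : (u', vf (u, u')) ∈ G.E1 ↔ (u', w) ∈ G.E1 := by
        rw [← hpatmem u' _ hu', ← hpatmem u' w hu', hpw]
      apply hdist
      rw [h1, h1']
      have := hiff w
      rw [hedge, hedge] at this
      constructor
      · intro h; exact (this.mp ⟨hu, hwT, h⟩).2.2
      · intro h; exact (this.mpr ⟨hu', hwT, h⟩).2.2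
    · intro b hb b' hb' hiff
      apply hpatinj b hb b' hb'
      ext a
      by_cases ha : a ∈ S
      · rw [hpatmem a b ha, hpatmem a b' ha]
        have := hiff a
        rw [hedge, hedge] at this
        constructor
        · intro h; exact (this.mp ⟨ha, hb, h⟩).2.2
        · intro h; exact (this.mpr ⟨ha, hb', h⟩).2.2
      · simp [pat, ha]
  · refine ⟨id, id, fun a ha => hS ha, fun b hb => (hT0 b (hTsub hb)).1, ?_⟩
    intro a ha b hb
    constructor
    · intro h
      exact (Finset.mem_filter.mp h).2
    · intro h
      have hmem : (a, b) ∈ G.E0 ∪ G.E1 ∪ G.E2 := by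
        rw [G.cover]
        exact Finset.mem_product.mpr ⟨hS ha, (hT0 b (hTsub hb)).1⟩
      rcases Finset.mem_union.mp hmem with h' | h'
      · rcases Finset.mem_union.mp h' with h'' | h''
        · exact h''
        · exact absurd (Finset.mem_filter.mpr
            ⟨Finset.mem_product.mpr ⟨ha, hb⟩, h''⟩) h
      · exact absurd h' ((hT0 b (hTsub hb)).2 a ha)

/-- Structure theorem for edge-colored bigraphs omitting all irreducible patterns. -/
theorem stmt_9 (C : ℕ) (hC : 1 ≤ C) (δ : ℝ) (hδ : 0 < δ) :
    ∃ eStar : ℝ, 0 < eStar ∧ ∀ ε : ℝ, 0 < ε → ε < eStar →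
      ∀ G : ECBigraph,
        (G.E2.card : ℝ) ≤ ε * G.left.card * G.right.card →
        (∀ R : Bigraph, R.Irreducible → R.left.card = C → ¬ G.Copy01 R) →
        ∃ m : ℕ, m < C ∧ ∃ x : Fin m → ℕ, (∀ i, x i ∈ G.left) ∧
          ∃ U₀ ⊆ G.left, (U₀.card : ℝ) ≤ Real.sqrt ε * G.left.card ∧
            ∀ u ∈ G.left \ U₀,
              ((Nbhd G.right G.E2 u).card : ℝ) ≤ Real.sqrt ε * G.right.card ∧
              ∃ i : Fin m,
                (((Nbhd G.right G.E1 u \ Nbhd G.right G.E1 (x i)) ∪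
                  (Nbhd G.right G.E1 (x i) \ Nbhd G.right G.E1 u)).card : ℝ) ≤
                    δ * G.right.card ∧
                (((Nbhd G.right G.E0 u \ Nbhd G.right G.E0 (x i)) ∪
                  (Nbhd G.right G.E0 (x i) \ Nbhd G.right G.E0 u)).card : ℝ) ≤
                    δ * G.right.card := by
    classical
  refine ⟨min 1 ((δ / (2 * C)) ^ 2), ?_, ?_⟩
  · have hC0 : (0:ℝ) < C := by exact_mod_cast hC
    have : (0:ℝ) < δ / (2 * C) := by positivity
    exact lt_min one_pos (by positivity)
  intro ε hε hεlt G hE2 hforb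
  have hC0 : (0:ℝ) < C := by exact_mod_cast hC
  have hεq : ε < (δ / (2 * C)) ^ 2 := lt_of_lt_of_le hεlt (min_le_right _ _)
  set sε := Real.sqrt ε with hsεdef
  have hsε0 : 0 < sε := Real.sqrt_pos.mpr hε
  have hsεlt : sε < δ / (2 * C) := by
    have h2 : (0:ℝ) < δ / (2 * C) := by positivity
    calc sε < Real.sqrt ((δ / (2 * C)) ^ 2) := Real.sqrt_lt_sqrt (le_of_lt hε) hεq
      _ = δ / (2 * C) := Real.sqrt_sq (le_of_lt h2)
  have hsεsq : sε * sε = ε := Real.mul_self_sqrt (le_of_lt hε)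
  set U₀ := G.left.filter
    (fun u => ¬ ((Nbhd G.right G.E2 u).card : ℝ) ≤ sε * G.right.card) with hU₀def
  have hU₀sub : U₀ ⊆ G.left := Finset.filter_subset _ _
  have hU₀card : (U₀.card : ℝ) ≤ sε * G.left.card := by
    by_cases hV : G.right.card = 0
    · have hVe : G.right = ∅ := Finset.card_eq_zero.mp hV
      have hU₀e : U₀ = ∅ := by
        rw [hU₀def, Finset.filter_eq_empty_iff]
        intro u hu
        rw [not_not]
        simp [Nbhd, hVe]
      rw [hU₀e]
      simp only [Finset.card_empty, Nat.cast_zero]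
      positivity
    · have hVpos : (0:ℝ) < G.right.card := by
        exact_mod_cast Nat.pos_of_ne_zero hV
      have hterm : ∀ u ∈ U₀, sε * G.right.card ≤ ((Nbhd G.right G.E2 u).card : ℝ) := by
        intro u hu
        rw [hU₀def, Finset.mem_filter] at hu
        exact le_of_lt (not_le.mp hu.2)
      have hsmul := Finset.card_nsmul_le_sum U₀ _ _ hterm
      rw [nsmul_eq_mul] at hsmul
      have hsum2 : ∑ u ∈ U₀, ((Nbhd G.right G.E2 u).card : ℝ) ≤ (G.E2.card : ℝ) := by
        have := sum_nbhd_le G.right G.E2 U₀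
        exact_mod_cast this
      have hchain : (U₀.card : ℝ) * (sε * G.right.card)
          ≤ (sε * G.left.card) * (sε * G.right.card) := by
        have heq : ε * G.left.card * G.right.card
            = (sε * G.left.card) * (sε * G.right.card) := by
          rw [← hsεsq]; ring
        calc (U₀.card : ℝ) * (sε * G.right.card)
            ≤ (G.E2.card : ℝ) := le_trans hsmul hsum2
          _ ≤ ε * G.left.card * G.right.card := hE2
          _ = (sε * G.left.card) * (sε * G.right.card) := heq
      exact le_of_mul_le_mul_right hchain (by positivity)
  have hdeg' : ∀ u ∈ G.left \ U₀,
      ((Nbhd G.right G.E2 u).card : ℝ) ≤ sε * G.right.card := by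
    intro u hu
    rw [Finset.mem_sdiff] at hu
    by_contra h
    exact hu.2 (by rw [hU₀def]; exact Finset.mem_filter.mpr ⟨hu.1, h⟩)
  set 𝒜 := (G.left \ U₀).powerset.filter
    (fun M => ∀ a ∈ M, ∀ b ∈ M, a ≠ b → FarP G δ a b) with h𝒜def
  have h𝒜ne : 𝒜.Nonempty := ⟨∅, by simp [h𝒜def]⟩
  obtain ⟨M, hM𝒜, hMmax⟩ := 𝒜.exists_max_image Finset.card h𝒜ne
  have hM𝒜' := hM𝒜
  simp only [h𝒜def, Finset.mem_filter, Finset.mem_powerset] at hM𝒜'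
  obtain ⟨hMsub, hMfar⟩ := hM𝒜'
  have hm : M.card < C := by
    by_contra h
    push_neg at h
    obtain ⟨S', hS'sub, hS'card⟩ := M.exists_subset_card_eq h
    have hCs : ((S' : Finset ℕ).card : ℝ) * (sε * G.right.card) ≤ δ * G.right.card := by
      rw [hS'card]
      have hCsε : (C : ℝ) * sε ≤ δ := by
        rw [lt_div_iff₀ (by positivity)] at hsεlt
        nlinarith
      calc (C : ℝ) * (sε * G.right.card) = ((C : ℝ) * sε) * G.right.card := by ring
        _ ≤ δ * G.right.card := mul_le_mul_of_nonneg_right hCsε (Nat.cast_nonneg _)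
    obtain ⟨R, hRirr, hRleft, hRcopy⟩ := key_lemma G δ sε S'
      (fun a ha => (Finset.mem_sdiff.mp (hMsub (hS'sub ha))).1)
      (fun w hw => hdeg' w (hMsub (hS'sub hw))) hCs
      (fun a ha b hb hne => hMfar a (hS'sub ha) b (hS'sub hb) hne)
    exact hforb R hRirr (by rw [hRleft, hS'card]) hRcopy
  refine ⟨M.card, hm, fun i => (M.orderIsoOfFin rfl i : ℕ),
    fun i => (Finset.mem_sdiff.mp (hMsub (M.orderIsoOfFin rfl i).2)).1,
    U₀, hU₀sub, hU₀card, ?_⟩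
  intro u hu
  refine ⟨hdeg' u hu, ?_⟩
  have hclose : ∃ b ∈ M, ¬ FarP G δ u b := by
    by_cases huM : u ∈ M
    · refine ⟨u, huM, ?_⟩
      unfold FarP
      rw [not_or]
      have h0 : (0:ℝ) ≤ δ * G.right.card := by positivity
      constructor <;> · rw [not_lt]; simp [Finset.sdiff_self]; linarith
    · by_contra h
      push_neg at h
      have hins : insert u M ∈ 𝒜 := by
        simp only [h𝒜def, Finset.mem_filter, Finset.mem_powerset]
        refine ⟨Finset.insert_subset hu hMsub, ?_⟩
        intro a ha b hb hne
        rcases Finset.mem_insert.mp ha with rfl | ha'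
        · rcases Finset.mem_insert.mp hb with rfl | hb'
          · exact absurd rfl hne
          · exact h b hb'
        · rcases Finset.mem_insert.mp hb with rfl | hb'
          · exact farP_symm (h a ha')
          · exact hMfar a ha' b hb' hne
      have hle := hMmax _ hins
      rw [Finset.card_insert_of_notMem huM] at hle
      omega
  obtain ⟨b, hbM, hbfar⟩ := hclose
  refine ⟨(M.orderIsoOfFin rfl).symm ⟨b, hbM⟩, ?_⟩
  simp only [OrderIso.apply_symm_apply]
  unfold FarP at hbfar
  rw [not_or, not_lt, not_lt] at hbfar
  exact ⟨hbfar.1, hbfar.2⟩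
end
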